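/- There exists an absolute constant C > 0 with the following property. Let R ∈ {0,1}^{|U|×|I|} be an implicit feedback matrix in which every row and every column contains at least one 1, and consider the bipartite user–item graph it defines; for each node k let N_k denote its degree, and set N_max = max_k N_k and N_min = min_k N_k. Suppose the initial embeddings e_k^{(0)} ∈ R^d, one per node, are drawn i.i.d. from the uniform distribution on the unit sphere S^{d−1}, with d > C · N_max³ · log(|I| + |U|) / N_min. Define the one-layer propagated user embedding e_u^{(1)} = (1/√N_u) Σ_{l ∈ N(u)} (1/√N_l) e_l^{(0)}, where N(u) is the set of items interacted with by user u. Then with probability at least 3/4, simultaneously for every user u, every item i with R_{u,i} = 1, and every item j with R_{u,j} = 0, it holds that ⟨e_u^{(1)}, e_i^{(0)}⟩ > ⟨e_u^{(1)}, e_j^{(0)}⟩. -/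

import Mathlib

open Matrix Finset MeasureTheory ProbabilityTheory
open scoped RealInnerProductSpace ENNReal

/-- Degree of a node of the bipartite user–item graph defined by a 0/1 matrix `R`:
an edge joins user `u` and item `i` iff `R u i = 1`. -/
noncomputable def bipartiteDeg {m n : ℕ} (R : Matrix (Fin m) (Fin n) ℝ) :
    Fin m ⊕ Fin n → ℕ
  | Sum.inl u => (Finset.univ.filter fun i => R u i = 1).card
  | Sum.inr i => (Finset.univ.filter fun u => R u i = 1).card

/-- The one-layer LightGCN propagated user embedding
`e_u^{(1)} = (1/√N_u) ∑_{i ∈ N(u)} (1/√N_i) e_i^{(0)}`. -/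
noncomputable def propagated {m n d : ℕ} (R : Matrix (Fin m) (Fin n) ℝ)
    (e : Fin m ⊕ Fin n → EuclideanSpace ℝ (Fin d)) (u : Fin m) :
    EuclideanSpace ℝ (Fin d) :=
  (Real.sqrt (bipartiteDeg R (Sum.inl u)))⁻¹ •
    ∑ i ∈ Finset.univ.filter (fun i => R u i = 1),
      (Real.sqrt (bipartiteDeg R (Sum.inr i)))⁻¹ • e (Sum.inr i)

/-- The uniform probability distribution on the unit sphere `S^{d-1} ⊆ ℝ^d`
(the normalized rotation-invariant surface measure, viewed as a measure on `ℝ^d`). -/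
noncomputable def uniformSphere (d : ℕ) : Measure (EuclideanSpace ℝ (Fin d)) :=
  Measure.map Subtype.val
    (((volume : Measure (EuclideanSpace ℝ (Fin d))).toSphere Set.univ)⁻¹ •
      (volume : Measure (EuclideanSpace ℝ (Fin d))).toSphere)

open Metric
open scoped Pointwise

section Cap
variable {d : ℕ}
local notation "E" => EuclideanSpace ℝ (Fin d)

lemma sphere_norm_ae : uniformSphere d {x : E | ‖x‖ ≠ 1} = 0 := by
  rw [uniformSphere, Measure.map_apply measurable_subtype_coe]
  · convert measure_empty
    · ext y
      simp [y.2, mem_sphere_zero_iff_norm.mp y.2]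
    · infer_instance
  · exact ((measurable_norm : Measurable fun x : E => ‖x‖) (measurableSet_singleton 1)).compl

lemma uniformSphere_apply (hd : 1 ≤ d) {A : Set E} (hA : MeasurableSet A) :
    uniformSphere d A =
      ((volume : Measure E).toSphere Set.univ)⁻¹ *
        (volume : Measure E).toSphere (Subtype.val ⁻¹' A) := by
  rw [uniformSphere, Measure.map_apply measurable_subtype_coe hA, Measure.smul_apply,
    smul_eq_mul]

lemma isProb_uniformSphere (hd : 1 ≤ d) : IsProbabilityMeasure (uniformSphere d) := by
  constructor
  rw [uniformSphere_apply hd MeasurableSet.univ, Set.preimage_univ]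
  have h1 : ((volume : Measure E).toSphere Set.univ) ≠ 0 := by
    rw [Measure.toSphere_apply_univ]
    simp only [ne_eq, mul_eq_zero, not_or]
    constructor
    · simp [finrank_euclideanSpace, hd]
      omega
    · exact (measure_ball_pos _ _ one_pos).ne'
  have h2 : ((volume : Measure E).toSphere Set.univ) ≠ ⊤ :=
    measure_ne_top _ _
  exact ENNReal.inv_mul_cancel h1 h2
end Cap

section Cap2
variable {d : ℕ}
local notation "E" => EuclideanSpace ℝ (Fin d)

lemma cone_subset (x : E) (hx : ‖x‖ = 1) {t : ℝ} (ht : 0 < t) (ht2 : t ^ 2 ≤ 1 / 2) :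
    Set.Ioo (0:ℝ) 1 • (Subtype.val '' (Subtype.val ⁻¹'
        {y : E | t ≤ ⟪x, y⟫} : Set (Metric.sphere (0:E) 1))) ⊆
      Metric.closedBall (t • x) (Real.sqrt (1 - t ^ 2)) := by
  rintro z hz
  obtain ⟨a, ha, w, hw, rfl⟩ := Set.mem_smul.mp hz
  obtain ⟨y, hyA, rfl⟩ := hw
  have hy1 : ‖(y : E)‖ = 1 := mem_sphere_zero_iff_norm.mp y.2
  have hyA' : t ≤ ⟪x, (y : E)⟫ := hyA
  have ha0 : 0 < a := ha.1
  have ha1 : a < 1 := ha.2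
  rw [Metric.mem_closedBall, dist_eq_norm]
  have hsq : ‖a • (y : E) - t • x‖ ^ 2 ≤ 1 - t ^ 2 := by
    have h1 : ‖a • (y : E) - t • x‖ ^ 2 =
        ‖a • (y : E)‖ ^ 2 - 2 * ⟪a • (y : E), t • x⟫ + ‖t • x‖ ^ 2 :=
      norm_sub_sq_real _ _
    have h2 : ⟪a • (y : E), t • x⟫ = a * (t * ⟪x, (y : E)⟫) := by
      rw [real_inner_smul_left, real_inner_smul_right, real_inner_comm]
    have h3 : ‖a • (y : E)‖ ^ 2 = a ^ 2 := by
      rw [norm_smul, hy1, Real.norm_eq_abs, abs_of_pos ha0]; ring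
    have h4 : ‖t • x‖ ^ 2 = t ^ 2 := by
      rw [norm_smul, hx, Real.norm_eq_abs, abs_of_pos ht]; ring
    rw [h1, h2, h3, h4]
    nlinarith [mul_le_mul_of_nonneg_left hyA' (by positivity : (0:ℝ) ≤ 2 * a * t)]
  have h5 : (0:ℝ) ≤ 1 - t ^ 2 := by nlinarith
  calc ‖a • (y : E) - t • x‖ = Real.sqrt (‖a • (y : E) - t • x‖ ^ 2) := by
        rw [Real.sqrt_sq (norm_nonneg _)]
    _ ≤ Real.sqrt (1 - t ^ 2) := Real.sqrt_le_sqrt hsq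

lemma cap_bound (hd : 1 ≤ d) (x : E) (hx : ‖x‖ = 1) {t : ℝ} (ht : 0 < t)
    (ht2 : t ^ 2 ≤ 1 / 2) :
    uniformSphere d {y : E | t ≤ ⟪x, y⟫} ≤
      ENNReal.ofReal (Real.exp (-(d : ℝ) * t ^ 2 / 2)) := by
  haveI : Nontrivial E := by
    refine nontrivial_of_ne (EuclideanSpace.single ⟨0, hd⟩ (1:ℝ)) 0 ?_
    intro h
    have := congrArg (fun v : E => v ⟨0, hd⟩) h
    simp [EuclideanSpace.single] at this
  have hA : MeasurableSet {y : E | t ≤ ⟪x, y⟫} :=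
    measurableSet_le measurable_const ((continuous_const.inner continuous_id).measurable)
  have hfr : Module.finrank ℝ E = d := finrank_euclideanSpace_fin
  have h5 : (0:ℝ) ≤ 1 - t ^ 2 := by nlinarith
  set r := Real.sqrt (1 - t ^ 2) with hr
  have hr0 : 0 ≤ r := Real.sqrt_nonneg _
  -- volume of the cone
  have hcone : (volume : Measure E).toSphere (Subtype.val ⁻¹' {y : E | t ≤ ⟪x, y⟫}) ≤
      (d : ℝ≥0∞) * (ENNReal.ofReal (r ^ d) * volume (Metric.ball (0:E) 1)) := by
    rw [Measure.toSphere_apply' _ (hA.preimage measurable_subtype_coe), hfr]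
    refine mul_le_mul_right ?_ _
    calc volume (Set.Ioo (0:ℝ) 1 • (Subtype.val '' (Subtype.val ⁻¹' {y : E | t ≤ ⟪x, y⟫})))
        ≤ volume (Metric.closedBall (t • x) r) :=
          measure_mono (cone_subset x hx ht ht2)
      _ = ENNReal.ofReal (r ^ d) * volume (Metric.ball (0:E) 1) := by
          rw [Measure.addHaar_closedBall_eq_addHaar_ball, Measure.addHaar_ball _ _ hr0, hfr]
  have hc : (volume : Measure E).toSphere Set.univ = (d : ℝ≥0∞) * volume (Metric.ball (0:E) 1) := by
    rw [Measure.toSphere_apply_univ, hfr]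
  have hball0 : volume (Metric.ball (0:E) 1) ≠ 0 := (measure_ball_pos _ _ one_pos).ne'
  have hballT : volume (Metric.ball (0:E) 1) ≠ ⊤ := measure_ball_lt_top.ne
  have hd0 : (d : ℝ≥0∞) ≠ 0 := Nat.cast_ne_zero.mpr (by omega)
  calc uniformSphere d {y : E | t ≤ ⟪x, y⟫}
      = ((volume : Measure E).toSphere Set.univ)⁻¹ *
          (volume : Measure E).toSphere (Subtype.val ⁻¹' {y : E | t ≤ ⟪x, y⟫}) :=
        uniformSphere_apply hd hA
    _ ≤ ((d : ℝ≥0∞) * volume (Metric.ball (0:E) 1))⁻¹ *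
          ((d : ℝ≥0∞) * (ENNReal.ofReal (r ^ d) * volume (Metric.ball (0:E) 1))) := by
        rw [hc]; exact mul_le_mul_right hcone _
    _ = ENNReal.ofReal (r ^ d) := by
        rw [ENNReal.mul_inv (Or.inl hd0) (Or.inl (ENNReal.natCast_ne_top d))]
        rw [show (d : ℝ≥0∞)⁻¹ * (volume (Metric.ball (0:E) 1))⁻¹ *
            ((d : ℝ≥0∞) * (ENNReal.ofReal (r ^ d) * volume (Metric.ball (0:E) 1))) =
            ((d : ℝ≥0∞)⁻¹ * (d : ℝ≥0∞)) * ((volume (Metric.ball (0:E) 1))⁻¹ *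
              volume (Metric.ball (0:E) 1)) * ENNReal.ofReal (r ^ d) by ring]
        rw [ENNReal.inv_mul_cancel hd0 (ENNReal.natCast_ne_top d),
          ENNReal.inv_mul_cancel hball0 hballT, one_mul, one_mul]
    _ ≤ ENNReal.ofReal (Real.exp (-(d : ℝ) * t ^ 2 / 2)) := by
        refine ENNReal.ofReal_le_ofReal ?_
        have h6 : r ≤ Real.exp (-(t ^ 2) / 2) := by
          rw [Real.exp_half]
          refine Real.sqrt_le_sqrt ?_
          have := Real.add_one_le_exp (-(t ^ 2))
          linarith
        calc r ^ d ≤ Real.exp (-(t ^ 2) / 2) ^ d := pow_le_pow_left₀ hr0 h6 d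
          _ = Real.exp (-(d : ℝ) * t ^ 2 / 2) := by
              rw [← Real.exp_nat_mul]; congr 1; ring
end Cap2

section Pair
variable {d : ℕ}
local notation "E" => EuclideanSpace ℝ (Fin d)

lemma pair_bound {Ω : Type} [MeasureSpace Ω] [IsProbabilityMeasure (ℙ : Measure Ω)]
    (hd : 1 ≤ d) {X Y : Ω → E} (hX : Measurable X) (hY : Measurable Y)
    (hXY : IndepFun X Y ℙ) (hmX : Measure.map X ℙ = uniformSphere d)
    (hmY : Measure.map Y ℙ = uniformSphere d) {t : ℝ} (ht : 0 < t) (ht2 : t ^ 2 ≤ 1/2) :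
    ℙ {ω | t < |⟪X ω, Y ω⟫|} ≤ 2 * ENNReal.ofReal (Real.exp (-(d:ℝ) * t ^ 2 / 2)) := by
  set μ := uniformSphere d with hμ
  haveI : IsProbabilityMeasure μ := isProb_uniformSphere hd
  have hS : MeasurableSet {p : E × E | t < |⟪p.1, p.2⟫|} := by
    have : Continuous fun p : E × E => |⟪p.1, p.2⟫| := continuous_abs.comp continuous_inner
    exact (isOpen_lt continuous_const this).measurableSet
  have hmap : Measure.map (fun ω => (X ω, Y ω)) ℙ = μ.prod μ := by
    rw [show (uniformSphere d).prod (uniformSphere d) = (Measure.map X ℙ).prod (Measure.map Y ℙ) by rw [hmX, hmY]]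
    exact (indepFun_iff_map_prod_eq_prod_map_map hX.aemeasurable hY.aemeasurable).mp hXY
  have h1 : ℙ {ω | t < |⟪X ω, Y ω⟫|} = (μ.prod μ) {p : E × E | t < |⟪p.1, p.2⟫|} := by
    rw [← hmap, Measure.map_apply (hX.prodMk hY) hS]
    rfl
  rw [h1, Measure.prod_apply hS]
  have hae : ∀ᵐ x ∂μ, ‖x‖ = 1 := by
    rw [ae_iff]
    exact sphere_norm_ae
  have key : ∀ᵐ x ∂μ, μ (Prod.mk x ⁻¹' {p : E × E | t < |⟪p.1, p.2⟫|}) ≤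
      2 * ENNReal.ofReal (Real.exp (-(d:ℝ) * t ^ 2 / 2)) := by
    filter_upwards [hae] with x hx
    have hsub : (Prod.mk x ⁻¹' {p : E × E | t < |⟪p.1, p.2⟫|}) ⊆
        {y : E | t ≤ ⟪x, y⟫} ∪ {y : E | t ≤ ⟪-x, y⟫} := by
      intro y hy
      simp only [Set.mem_preimage, Set.mem_setOf_eq] at hy
      rcases lt_abs.mp hy with h | h
      · exact Or.inl (le_of_lt h)
      · refine Or.inr ?_
        have : ⟪-x, y⟫ = -⟪x, y⟫ := inner_neg_left x y
        simp only [Set.mem_setOf_eq, this]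
        linarith
    calc μ (Prod.mk x ⁻¹' {p : E × E | t < |⟪p.1, p.2⟫|})
        ≤ μ ({y : E | t ≤ ⟪x, y⟫} ∪ {y : E | t ≤ ⟪-x, y⟫}) := measure_mono hsub
      _ ≤ μ {y : E | t ≤ ⟪x, y⟫} + μ {y : E | t ≤ ⟪-x, y⟫} := measure_union_le _ _
      _ ≤ ENNReal.ofReal (Real.exp (-(d:ℝ) * t ^ 2 / 2)) +
            ENNReal.ofReal (Real.exp (-(d:ℝ) * t ^ 2 / 2)) := by
          refine add_le_add (cap_bound hd x hx ht ht2) (cap_bound hd (-x) ?_ ht ht2)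
          rw [norm_neg, hx]
      _ = 2 * ENNReal.ofReal (Real.exp (-(d:ℝ) * t ^ 2 / 2)) := (two_mul _).symm
  calc ∫⁻ x, μ (Prod.mk x ⁻¹' {p : E × E | t < |⟪p.1, p.2⟫|}) ∂μ
      ≤ ∫⁻ _, 2 * ENNReal.ofReal (Real.exp (-(d:ℝ) * t ^ 2 / 2)) ∂μ := lintegral_mono_ae key
    _ = 2 * ENNReal.ofReal (Real.exp (-(d:ℝ) * t ^ 2 / 2)) := by
        rw [lintegral_const, measure_univ, mul_one]
end Pair

lemma det_lemma {m n d : ℕ} (R : Matrix (Fin m) (Fin n) ℝ)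
    (v : Fin m ⊕ Fin n → EuclideanSpace ℝ (Fin d))
    (a b : ℕ) (ha : ∀ k, bipartiteDeg R k ≤ a) (hb : ∀ k, b ≤ bipartiteDeg R k)
    (hb1 : 1 ≤ b) {t : ℝ}
    (ht : t = Real.sqrt b / (4 * a * Real.sqrt a))
    (hnorm : ∀ i : Fin n, ‖v (Sum.inr i)‖ = 1)
    (hsep : ∀ i j : Fin n, i ≠ j → |⟪v (Sum.inr i), v (Sum.inr j)⟫| ≤ t)
    (u : Fin m) (i j : Fin n) (hi : R u i = 1) (hj : R u j = 0) :
    ⟪propagated R v u, v (Sum.inr j)⟫ < ⟪propagated R v u, v (Sum.inr i)⟫ := by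
  have hab : b ≤ a := le_trans (hb (Sum.inl u)) (ha (Sum.inl u))
  have ha1 : 1 ≤ a := le_trans hb1 hab
  set A : ℝ := (a : ℝ) with hA
  set B : ℝ := (b : ℝ) with hB
  have hA1 : (1:ℝ) ≤ A := by rw [hA]; exact_mod_cast ha1
  have hB1 : (1:ℝ) ≤ B := by rw [hB]; exact_mod_cast hb1
  have hBA : B ≤ A := by rw [hA, hB]; exact_mod_cast hab
  have hsa : 0 < Real.sqrt A := Real.sqrt_pos.mpr (by linarith)
  have hsb : 0 < Real.sqrt B := Real.sqrt_pos.mpr (by linarith)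
  have ht0 : 0 < t := by rw [ht]; positivity
  set s : Finset (Fin n) := Finset.univ.filter (fun l => R u l = 1) with hs
  set g : Fin n → ℝ := fun l => (Real.sqrt (bipartiteDeg R (Sum.inr l)))⁻¹ with hg
  have hgpos : ∀ l, 0 < g l := by
    intro l
    have : (1:ℝ) ≤ (bipartiteDeg R (Sum.inr l) : ℝ) := by
      exact_mod_cast le_trans hb1 (hb (Sum.inr l))
    exact inv_pos.mpr (Real.sqrt_pos.mpr (by linarith))
  have hgle : ∀ l, g l ≤ (Real.sqrt B)⁻¹ := by
    intro l
    refine inv_anti₀ hsb (Real.sqrt_le_sqrt ?_)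
    rw [hB]; exact_mod_cast hb (Sum.inr l)
  have hgi : (Real.sqrt A)⁻¹ ≤ g i := by
    refine inv_anti₀ ?_ (Real.sqrt_le_sqrt ?_)
    · have : (1:ℝ) ≤ (bipartiteDeg R (Sum.inr i) : ℝ) := by
        exact_mod_cast le_trans hb1 (hb (Sum.inr i))
      exact Real.sqrt_pos.mpr (by linarith)
    · rw [hA]; exact_mod_cast ha (Sum.inr i)
  have hcard : (s.card : ℝ) ≤ A := by
    have : s.card = bipartiteDeg R (Sum.inl u) := rfl
    rw [this, hA]; exact_mod_cast ha (Sum.inl u)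
  have hscore : ∀ w, ⟪propagated R v u, w⟫ =
      (Real.sqrt (bipartiteDeg R (Sum.inl u)))⁻¹ * ∑ l ∈ s, g l * ⟪v (Sum.inr l), w⟫ := by
    intro w
    rw [propagated, real_inner_smul_left, sum_inner]
    congr 1
    exact Finset.sum_congr rfl fun l _ => real_inner_smul_left _ _ _
  rw [hscore, hscore]
  have hNu : 0 < (Real.sqrt (bipartiteDeg R (Sum.inl u)))⁻¹ := by
    have : (1:ℝ) ≤ (bipartiteDeg R (Sum.inl u) : ℝ) := by
      exact_mod_cast le_trans hb1 (hb (Sum.inl u))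
    exact inv_pos.mpr (Real.sqrt_pos.mpr (by linarith))
  refine mul_lt_mul_of_pos_left ?_ hNu
  -- bound the j-sum
  have hjs : ∀ l ∈ s, l ≠ j := by
    intro l hl
    rintro rfl
    rw [Finset.mem_filter] at hl
    rw [hl.2] at hj
    norm_num at hj
  have hterm : ∀ (w : Fin n) (l : Fin n), l ≠ w →
      g l * ⟪v (Sum.inr l), v (Sum.inr w)⟫ ≤ (Real.sqrt B)⁻¹ * t ∧
      -((Real.sqrt B)⁻¹ * t) ≤ g l * ⟪v (Sum.inr l), v (Sum.inr w)⟫ := by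
    intro w l hlw
    have h1 : |g l * ⟪v (Sum.inr l), v (Sum.inr w)⟫| ≤ (Real.sqrt B)⁻¹ * t := by
      rw [abs_mul, abs_of_pos (hgpos l)]
      exact mul_le_mul (hgle l) (hsep l w hlw) (abs_nonneg _) (le_of_lt (inv_pos.mpr hsb))
    exact ⟨le_trans (le_abs_self _) h1, by
      have := neg_abs_le (g l * ⟪v (Sum.inr l), v (Sum.inr w)⟫); linarith⟩
  have hSJ : ∑ l ∈ s, g l * ⟪v (Sum.inr l), v (Sum.inr j)⟫ ≤ A * ((Real.sqrt B)⁻¹ * t) := by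
    calc ∑ l ∈ s, g l * ⟪v (Sum.inr l), v (Sum.inr j)⟫
        ≤ ∑ _l ∈ s, (Real.sqrt B)⁻¹ * t :=
          Finset.sum_le_sum fun l hl => (hterm j l (hjs l hl)).1
      _ = (s.card : ℝ) * ((Real.sqrt B)⁻¹ * t) := by
          rw [Finset.sum_const, nsmul_eq_mul]
      _ ≤ A * ((Real.sqrt B)⁻¹ * t) := by
          refine mul_le_mul_of_nonneg_right hcard (by positivity)
  have his : i ∈ s := by rw [hs, Finset.mem_filter]; exact ⟨Finset.mem_univ _, hi⟩
  have hSI : (Real.sqrt A)⁻¹ - A * ((Real.sqrt B)⁻¹ * t) ≤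
      ∑ l ∈ s, g l * ⟪v (Sum.inr l), v (Sum.inr i)⟫ := by
    have hsplit : ∑ l ∈ s.erase i, g l * ⟪v (Sum.inr l), v (Sum.inr i)⟫ +
        g i * ⟪v (Sum.inr i), v (Sum.inr i)⟫ =
        ∑ l ∈ s, g l * ⟪v (Sum.inr l), v (Sum.inr i)⟫ :=
      Finset.sum_erase_add s _ his
    have hii : ⟪v (Sum.inr i), v (Sum.inr i)⟫ = 1 := by
      rw [real_inner_self_eq_norm_sq, hnorm i]; norm_num
    have herase : -(A * ((Real.sqrt B)⁻¹ * t)) ≤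
        ∑ l ∈ s.erase i, g l * ⟪v (Sum.inr l), v (Sum.inr i)⟫ := by
      calc -(A * ((Real.sqrt B)⁻¹ * t))
          ≤ -(((s.erase i).card : ℝ) * ((Real.sqrt B)⁻¹ * t)) := by
            refine neg_le_neg (mul_le_mul_of_nonneg_right ?_ (by positivity))
            calc ((s.erase i).card : ℝ) ≤ (s.card : ℝ) := by
                  exact_mod_cast Finset.card_le_card (Finset.erase_subset _ _)
              _ ≤ A := hcard
        _ = ∑ _l ∈ s.erase i, -((Real.sqrt B)⁻¹ * t) := by
            rw [Finset.sum_const, nsmul_eq_mul]; ring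
        _ ≤ ∑ l ∈ s.erase i, g l * ⟪v (Sum.inr l), v (Sum.inr i)⟫ :=
            Finset.sum_le_sum fun l hl => (hterm i l (Finset.ne_of_mem_erase hl)).2
    have : (Real.sqrt A)⁻¹ ≤ g i * ⟪v (Sum.inr i), v (Sum.inr i)⟫ := by
      rw [hii, mul_one]; exact hgi
    linarith
  have hkey : 2 * (A * ((Real.sqrt B)⁻¹ * t)) < (Real.sqrt A)⁻¹ := by
    rw [ht]
    have hsbB : Real.sqrt B ≠ 0 := ne_of_gt hsb
    have hA0 : A ≠ 0 := by positivity
    rw [div_eq_mul_inv]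
    have : A * ((Real.sqrt B)⁻¹ * (Real.sqrt B * (4 * A * Real.sqrt A)⁻¹)) =
        (4 * Real.sqrt A)⁻¹ := by
      field_simp
    rw [this, show (2:ℝ) * (4 * Real.sqrt A)⁻¹ = (2 * Real.sqrt A)⁻¹ by
      field_simp; ring]
    rw [inv_lt_inv₀ (by positivity) (by positivity)]
    linarith
  linarith

/-- Theorem 1: for i.i.d. uniform-on-the-sphere initial embeddings of sufficiently
large dimension, with probability at least 3/4 all positive user–item pairs score
higher than all negative pairs under one-layer untrained LightGCN. -/
theorem stmt5 :
    ∃ C : ℝ, 0 < C ∧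
      ∀ (m n d : ℕ) (hm : 0 < m) (_hn : 0 < n) (R : Matrix (Fin m) (Fin n) ℝ),
        (∀ u i, R u i = 0 ∨ R u i = 1) →
        (∀ u, ∃ i, R u i = 1) →
        (∀ i, ∃ u, R u i = 1) →
        ∀ (Ω : Type) [MeasureSpace Ω] [IsProbabilityMeasure (ℙ : Measure Ω)]
          (e : Fin m ⊕ Fin n → Ω → EuclideanSpace ℝ (Fin d)),
          (∀ k, Measurable (e k)) →
          ProbabilityTheory.iIndepFun e ℙ →
          (∀ k, Measure.map (e k) ℙ = uniformSphere d) →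
          (d : ℝ) > C * ((Finset.univ.sup' ⟨Sum.inl ⟨0, hm⟩, Finset.mem_univ _⟩
              (bipartiteDeg R) : ℕ) : ℝ) ^ 3 * Real.log ((n : ℝ) + (m : ℝ)) /
            ((Finset.univ.inf' ⟨Sum.inl ⟨0, hm⟩, Finset.mem_univ _⟩
              (bipartiteDeg R) : ℕ) : ℝ) →
          ℙ {ω | ∀ (u : Fin m) (i j : Fin n), R u i = 1 → R u j = 0 →
              ⟪propagated R (fun k => e k ω) u, e (Sum.inr i) ω⟫ >
              ⟪propagated R (fun k => e k ω) u, e (Sum.inr j) ω⟫} ≥ 3 / 4 := by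
  refine ⟨1000, by norm_num, ?_⟩
  intro m n d hm hn R h01 hrow hcol Ω _ _ e he hindep hmap hd
  set a : ℕ := Finset.univ.sup' ⟨Sum.inl ⟨0, hm⟩, Finset.mem_univ _⟩ (bipartiteDeg R) with hadef
  set b : ℕ := Finset.univ.inf' ⟨Sum.inl ⟨0, hm⟩, Finset.mem_univ _⟩ (bipartiteDeg R) with hbdef
  have ha : ∀ k, bipartiteDeg R k ≤ a := fun k => Finset.le_sup' _ (Finset.mem_univ k)
  have hbk : ∀ k, b ≤ bipartiteDeg R k := fun k => Finset.inf'_le _ (Finset.mem_univ k)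
  have hdeg1 : ∀ k, 1 ≤ bipartiteDeg R k := by
    rintro (u | i)
    · obtain ⟨i, hi⟩ := hrow u
      exact Finset.card_pos.mpr ⟨i, Finset.mem_filter.mpr ⟨Finset.mem_univ _, hi⟩⟩
    · obtain ⟨u, hu⟩ := hcol i
      exact Finset.card_pos.mpr ⟨u, Finset.mem_filter.mpr ⟨Finset.mem_univ _, hu⟩⟩
  have hb1 : 1 ≤ b := Finset.le_inf' _ _ fun k _ => hdeg1 k
  have hab : b ≤ a := le_trans (hbk (Sum.inl ⟨0, hm⟩)) (ha (Sum.inl ⟨0, hm⟩))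
  set A : ℝ := (a : ℝ) with hA
  set B : ℝ := (b : ℝ) with hB
  have hA1 : (1:ℝ) ≤ A := by rw [hA]; exact_mod_cast le_trans hb1 hab
  have hB1 : (1:ℝ) ≤ B := by rw [hB]; exact_mod_cast hb1
  have hBA : B ≤ A := by rw [hA, hB]; exact_mod_cast hab
  have hA0 : (0:ℝ) < A := by linarith
  have hB0 : (0:ℝ) < B := by linarith
  set L : ℝ := Real.log ((n : ℝ) + (m : ℝ)) with hL
  have hnm2 : (2:ℝ) ≤ (n : ℝ) + (m : ℝ) := by
    have h1 : (1:ℝ) ≤ (n:ℝ) := by exact_mod_cast hn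
    have h2 : (1:ℝ) ≤ (m:ℝ) := by exact_mod_cast hm
    linarith
  have hL2 : Real.log 2 ≤ L := by
    rw [hL]; exact Real.log_le_log (by norm_num) hnm2
  have hL0 : 0 < L := lt_of_lt_of_le (Real.log_pos (by norm_num)) hL2
  have hd1 : 1 ≤ d := by
    by_contra h
    push_neg at h
    interval_cases d
    have : (0:ℝ) < 1000 * A ^ 3 * L / B := by positivity
    simp only [Nat.cast_zero] at hd
    linarith
  -- the threshold
  set t : ℝ := Real.sqrt B / (4 * A * Real.sqrt A) with htdef
  have hsa : 0 < Real.sqrt A := Real.sqrt_pos.mpr hA0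
  have hsb : 0 < Real.sqrt B := Real.sqrt_pos.mpr hB0
  have ht0 : 0 < t := by rw [htdef]; positivity
  have ht2eq : t ^ 2 = B / (16 * A ^ 3) := by
    rw [htdef, div_pow, Real.sq_sqrt hB0.le]
    congr 1
    rw [mul_pow, mul_pow, Real.sq_sqrt hA0.le]
    ring
  have ht2 : t ^ 2 ≤ 1 / 2 := by
    rw [ht2eq, div_le_iff₀ (by positivity)]
    nlinarith [mul_nonneg (mul_nonneg (by linarith : (0:ℝ) ≤ A)
      (by linarith : (0:ℝ) ≤ A - 1)) (by linarith : (0:ℝ) ≤ A + 1)]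
  set εr : ℝ := Real.exp (-(d:ℝ) * t ^ 2 / 2) with hεr
  -- main numeric bound
  have hdt2 : 125 * L / 2 < (d:ℝ) * t ^ 2 := by
    have h1 : (1000 * A ^ 3 * L / B) * (B / (16 * A ^ 3)) ≤ (d:ℝ) * (B / (16 * A ^ 3)) := by
      refine mul_le_mul_of_nonneg_right (le_of_lt hd) (by positivity)
    have h2 : (1000 * A ^ 3 * L / B) * (B / (16 * A ^ 3)) = 125 * L / 2 := by
      field_simp
      ring
    rw [ht2eq]
    have h3 := mul_lt_mul_of_pos_right hd (by positivity : (0:ℝ) < B / (16 * A ^ 3))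
    linarith
  have hn1 : (1:ℝ) ≤ (n:ℝ) := by exact_mod_cast hn
  have hlog : Real.log (8 * (n:ℝ) ^ 2) ≤ 5 * L := by
    have h8 : Real.log (8 * (n:ℝ) ^ 2) = Real.log 8 + 2 * Real.log (n:ℝ) := by
      rw [Real.log_mul (by norm_num) (by positivity), Real.log_pow]
      push_cast; ring
    have h9 : Real.log 8 ≤ 3 * L := by
      have : Real.log 8 = 3 * Real.log 2 := by
        rw [show (8:ℝ) = 2 ^ 3 by norm_num, Real.log_pow]; push_cast; ring
      linarith
    have h10 : Real.log (n:ℝ) ≤ L := by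
      rw [hL]
      refine Real.log_le_log (by linarith) (by
        have : (0:ℝ) ≤ (m:ℝ) := by positivity
        linarith)
    linarith
  have hexp : εr < (8 * (n:ℝ) ^ 2)⁻¹ := by
    rw [hεr, show (8 * (n:ℝ) ^ 2)⁻¹ = Real.exp (-Real.log (8 * (n:ℝ) ^ 2)) by
      rw [Real.exp_neg, Real.exp_log (by positivity)]]
    refine Real.exp_lt_exp.mpr ?_
    linarith [hdt2, hlog, hL0]
  have hmain : (n:ℝ) * (n:ℝ) * (2 * εr) ≤ 1 / 4 := by
    have hε0 : 0 < εr := Real.exp_pos _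
    have h1 : (n:ℝ) * (n:ℝ) * (2 * εr) ≤ (n:ℝ) * (n:ℝ) * (2 * (8 * (n:ℝ) ^ 2)⁻¹) := by
      refine mul_le_mul_of_nonneg_left (by linarith) (by positivity)
    have h2 : (n:ℝ) * (n:ℝ) * (2 * (8 * (n:ℝ) ^ 2)⁻¹) = 1 / 4 := by
      field_simp
      ring
    linarith
  -- good event
  set G : Set Ω := {ω | (∀ k : Fin n, ‖e (Sum.inr k) ω‖ = 1) ∧
      ∀ p : Fin n × Fin n, p.1 ≠ p.2 →
        |⟪e (Sum.inr p.1) ω, e (Sum.inr p.2) ω⟫| ≤ t} with hG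
  have hGmeas : MeasurableSet G := by
    have h1 : MeasurableSet {ω : Ω | ∀ k : Fin n, ‖e (Sum.inr k) ω‖ = 1} := by
      rw [Set.setOf_forall]
      exact MeasurableSet.iInter fun k => (he _).norm (measurableSet_singleton 1)
    have h2 : MeasurableSet {ω : Ω | ∀ p : Fin n × Fin n, p.1 ≠ p.2 →
        |⟪e (Sum.inr p.1) ω, e (Sum.inr p.2) ω⟫| ≤ t} := by
      rw [Set.setOf_forall]
      refine MeasurableSet.iInter fun p => ?_
      by_cases hp : p.1 = p.2
      · simp [hp]
      · rw [show {ω | p.1 ≠ p.2 → |⟪e (Sum.inr p.1) ω, e (Sum.inr p.2) ω⟫| ≤ t} =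
            {ω | |⟪e (Sum.inr p.1) ω, e (Sum.inr p.2) ω⟫| ≤ t} by
              ext ω; simp [hp]]
        exact measurableSet_le (((he _).inner (he _)).abs) measurable_const
    rw [hG, Set.setOf_and]
    exact h1.inter h2
  have hsubset : G ⊆ {ω | ∀ (u : Fin m) (i j : Fin n), R u i = 1 → R u j = 0 →
      ⟪propagated R (fun k => e k ω) u, e (Sum.inr i) ω⟫ >
      ⟪propagated R (fun k => e k ω) u, e (Sum.inr j) ω⟫} := by
    intro ω hω u i j hi hj
    exact det_lemma R (fun k => e k ω) a b ha hbk hb1 rfl hω.1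
      (fun i' j' hne => hω.2 (i', j') hne) u i j hi hj
  -- complement bound
  have hGc : ℙ Gᶜ ≤ 1 / 4 := by
    have hsub2 : Gᶜ ⊆ (⋃ k : Fin n, {ω | ‖e (Sum.inr k) ω‖ ≠ 1}) ∪
        ⋃ p : Fin n × Fin n, {ω | p.1 ≠ p.2 ∧
          t < |⟪e (Sum.inr p.1) ω, e (Sum.inr p.2) ω⟫|} := by
      intro ω hω
      rw [Set.mem_compl_iff, hG] at hω
      simp only [Set.mem_setOf_eq, not_and_or, not_forall] at hω
      rcases hω with h | h
      · obtain ⟨k, hk⟩ := h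
        exact Or.inl (Set.mem_iUnion.mpr ⟨k, hk⟩)
      · obtain ⟨p, hp⟩ := h
        push_neg at hp
        exact Or.inr (Set.mem_iUnion.mpr ⟨p, hp.1, hp.2⟩)
    have hN : ℙ (⋃ k : Fin n, {ω | ‖e (Sum.inr k) ω‖ ≠ 1}) = 0 := by
      refine measure_iUnion_null fun k => ?_
      have hset : MeasurableSet {x : EuclideanSpace ℝ (Fin d) | ‖x‖ ≠ 1} :=
        ((measurable_norm : Measurable fun x : EuclideanSpace ℝ (Fin d) => ‖x‖)
          (measurableSet_singleton 1)).compl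
      have heq : ℙ {ω | ‖e (Sum.inr k) ω‖ ≠ 1} =
          Measure.map (e (Sum.inr k)) ℙ {x : EuclideanSpace ℝ (Fin d) | ‖x‖ ≠ 1} :=
        (Measure.map_apply (he _) hset).symm
      rw [heq, hmap]
      exact sphere_norm_ae
    have hBp : ∀ p : Fin n × Fin n, ℙ {ω | p.1 ≠ p.2 ∧
        t < |⟪e (Sum.inr p.1) ω, e (Sum.inr p.2) ω⟫|} ≤ 2 * ENNReal.ofReal εr := by
      intro p
      by_cases hp : p.1 = p.2
      · rw [show {ω | p.1 ≠ p.2 ∧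
            t < |⟪e (Sum.inr p.1) ω, e (Sum.inr p.2) ω⟫|} = (∅ : Set Ω) by
              ext ω; simp [hp]]
        simp
      · have hIndep : IndepFun (e (Sum.inr p.1)) (e (Sum.inr p.2)) ℙ := by
          exact hindep.indepFun (by simp [hp])
        calc ℙ {ω | p.1 ≠ p.2 ∧ t < |⟪e (Sum.inr p.1) ω, e (Sum.inr p.2) ω⟫|}
            ≤ ℙ {ω | t < |⟪e (Sum.inr p.1) ω, e (Sum.inr p.2) ω⟫|} :=
              measure_mono fun ω hω => hω.2
          _ ≤ 2 * ENNReal.ofReal εr :=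
              pair_bound hd1 (he _) (he _) hIndep (hmap _) (hmap _) ht0 ht2
    have hBsum : ℙ (⋃ p : Fin n × Fin n, {ω | p.1 ≠ p.2 ∧
        t < |⟪e (Sum.inr p.1) ω, e (Sum.inr p.2) ω⟫|}) ≤
        (n * n : ℕ) * (2 * ENNReal.ofReal εr) := by
      calc ℙ (⋃ p : Fin n × Fin n, _) ≤ ∑' p : Fin n × Fin n, ℙ {ω | p.1 ≠ p.2 ∧
            t < |⟪e (Sum.inr p.1) ω, e (Sum.inr p.2) ω⟫|} := measure_iUnion_le _
        _ ≤ ∑' _p : Fin n × Fin n, 2 * ENNReal.ofReal εr := ENNReal.tsum_le_tsum hBp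
        _ = (n * n : ℕ) * (2 * ENNReal.ofReal εr) := by
            rw [tsum_fintype]
            rw [Finset.sum_const, Finset.card_univ]
            simp [Fintype.card_prod, nsmul_eq_mul]
    calc ℙ Gᶜ ≤ ℙ ((⋃ k : Fin n, {ω | ‖e (Sum.inr k) ω‖ ≠ 1}) ∪
          ⋃ p : Fin n × Fin n, {ω | p.1 ≠ p.2 ∧
            t < |⟪e (Sum.inr p.1) ω, e (Sum.inr p.2) ω⟫|}) := measure_mono hsub2
      _ ≤ ℙ (⋃ k : Fin n, {ω | ‖e (Sum.inr k) ω‖ ≠ 1}) +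
          ℙ (⋃ p : Fin n × Fin n, {ω | p.1 ≠ p.2 ∧
            t < |⟪e (Sum.inr p.1) ω, e (Sum.inr p.2) ω⟫|}) := measure_union_le _ _
      _ ≤ 0 + (n * n : ℕ) * (2 * ENNReal.ofReal εr) := add_le_add hN.le hBsum
      _ = (n * n : ℕ) * (2 * ENNReal.ofReal εr) := by rw [zero_add]
      _ ≤ 1 / 4 := by
          have h1 : ((n * n : ℕ) : ℝ≥0∞) * (2 * ENNReal.ofReal εr) =
              ENNReal.ofReal ((n:ℝ) * (n:ℝ) * (2 * εr)) := by
            rw [← ENNReal.ofReal_natCast (n * n), ← ENNReal.ofReal_ofNat 2,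
              ← ENNReal.ofReal_mul (by norm_num : (0:ℝ) ≤ 2),
              ← ENNReal.ofReal_mul (by positivity : (0:ℝ) ≤ ((n * n : ℕ) : ℝ))]
            congr 1
            push_cast
            ring
          rw [h1]
          calc ENNReal.ofReal ((n:ℝ) * (n:ℝ) * (2 * εr)) ≤ ENNReal.ofReal (1/4) :=
                ENNReal.ofReal_le_ofReal hmain
            _ = 1 / 4 := by
                rw [ENNReal.ofReal_div_of_pos (by norm_num), ENNReal.ofReal_one,
                  ENNReal.ofReal_ofNat]
  have hGge : ℙ G ≥ 3 / 4 := by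
    have h1 : ℙ Gᶜᶜ = 1 - ℙ Gᶜ := prob_compl_eq_one_sub hGmeas.compl
    rw [compl_compl] at h1
    have h34 : (1:ℝ≥0∞) - 1/4 = 3/4 :=
      ENNReal.sub_eq_of_eq_add (by norm_num) (by
        rw [ENNReal.div_add_div_same]
        norm_num
        exact (ENNReal.div_self (by norm_num) (by norm_num)).symm)
    rw [h1, ← h34]
    exact tsub_le_tsub_left hGc 1
  calc (3:ℝ≥0∞)/4 ≤ ℙ G := hGge
    _ ≤ ℙ _ := measure_mono hsubset
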